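/- Let S be a finite nonempty set, let p1(·|s) and p2(·|s) be two Markov transition kernels on S, and let both chains start from the same initial state distribution, i.e. p1^0 = p2^0. Define the time-t state marginals recursively by p_i^t(s) = Σ_{s'} p_i(s|s')·p_i^{t−1}(s'). If for every timestep t one has E_{s∼p1^t}[ TV(p1(·|s), p2(·|s)) ] ≤ δ, then for every t, TV(p1^t, p2^t) ≤ t·δ. -/

import Mathlib

open scoped BigOperators

/-- Total variation distance between two probability mass functions on a finite type. -/
noncomputable def tv {X : Type*} [Fintype X] (q1 q2 : PMF X) : ℝ :=
  (1 / 2) * ∑ x, |(q1 x).toReal - (q2 x).toReal|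

/-- Total variation distance between two real-valued distributions on a finite type. -/
noncomputable def tvFun {X : Type*} [Fintype X] (d1 d2 : X → ℝ) : ℝ :=
  (1 / 2) * ∑ x, |d1 x - d2 x|

/-- Time-`t` state-action marginal of a (possibly time-varying) policy/dynamics pair,
started from initial state distribution `ρ0`:  `d⁰(s,a) = ρ0(s)·π₀(a|s)` and
`d^{t+1}(s,a) = Σ_{s',a'} d^t(s',a')·p_t(s|s',a')·π_{t+1}(a|s)`. -/
noncomputable def marginal {S A : Type*} [Fintype S] [Fintype A]
    (ρ0 : PMF S) (πseq : ℕ → S → PMF A) (pseq : ℕ → S × A → PMF S) :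
    ℕ → S × A → ℝ
  | 0 => fun sa => (ρ0 sa.1).toReal * ((πseq 0 sa.1) sa.2).toReal
  | t + 1 => fun sa =>
      ∑ s' : S, ∑ a' : A,
        marginal ρ0 πseq pseq t (s', a') * ((pseq t (s', a')) sa.1).toReal *
          ((πseq (t + 1) sa.1) sa.2).toReal

/-- Discounted return `η = Σ_t γ^t Σ_{s,a} d^t(s,a)·r(s,a)`. -/
noncomputable def ret {S A : Type*} [Fintype S] [Fintype A]
    (γ : ℝ) (r : S × A → ℝ) (d : ℕ → S × A → ℝ) : ℝ :=
  ∑' t : ℕ, γ ^ t * ∑ sa : S × A, d t sa * r sa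

/-- Time-`t` state marginal of a Markov chain with kernel `p` and initial distribution `q0`. -/
noncomputable def chainMarginal {S : Type*} [Fintype S] (p : S → PMF S) (q0 : PMF S) :
    ℕ → S → ℝ
  | 0 => fun s => (q0 s).toReal
  | t + 1 => fun s => ∑ s' : S, ((p s') s).toReal * chainMarginal p q0 t s'


lemma pmf_sum_toReal {S : Type*} [Fintype S] (q : PMF S) : ∑ s, (q s).toReal = 1 := by
  have h : ∑ s, q s = 1 := by simpa [tsum_fintype] using q.tsum_coe
  rw [← ENNReal.toReal_sum (fun s _ => q.apply_ne_top s), h, ENNReal.toReal_one]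

lemma chainMarginal_nonneg {S : Type*} [Fintype S] (p : S → PMF S) (q0 : PMF S) :
    ∀ t s, 0 ≤ chainMarginal p q0 t s := by
  intro t
  induction t with
  | zero => intro s; exact ENNReal.toReal_nonneg
  | succ t ih =>
    intro s
    exact Finset.sum_nonneg fun s' _ => mul_nonneg ENNReal.toReal_nonneg (ih s')

/-- Markov chain TVD bound, time-varying (Lemma B.2). -/
theorem markov_chain_tvd_bound
    {S : Type*} [Fintype S] [Nonempty S]
    (p1 p2 : S → PMF S) (q0 : PMF S) (δ : ℝ)
    (hδ : ∀ t : ℕ, ∑ s : S, chainMarginal p1 q0 t s * tv (p1 s) (p2 s) ≤ δ) :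
    ∀ t : ℕ, tvFun (chainMarginal p1 q0 t) (chainMarginal p2 q0 t) ≤ (t : ℝ) * δ := by
  intro t
  induction t with
  | zero => simp [tvFun, chainMarginal]
  | succ t ih =>
    set d1 := chainMarginal p1 q0 t with hd1
    set d2 := chainMarginal p2 q0 t with hd2
    have hd1n : ∀ s, 0 ≤ d1 s := chainMarginal_nonneg p1 q0 t
    have hstep : ∀ s : S,
        |(∑ s', ((p1 s') s).toReal * d1 s') - (∑ s', ((p2 s') s).toReal * d2 s')|
        ≤ ∑ s', (d1 s' * |((p1 s') s).toReal - ((p2 s') s).toReal|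
                 + ((p2 s') s).toReal * |d1 s' - d2 s'|) := by
      intro s
      rw [← Finset.sum_sub_distrib]
      refine (Finset.abs_sum_le_sum_abs _ _).trans (Finset.sum_le_sum fun s' _ => ?_)
      have heq : ((p1 s') s).toReal * d1 s' - ((p2 s') s).toReal * d2 s'
          = (((p1 s') s).toReal - ((p2 s') s).toReal) * d1 s'
            + ((p2 s') s).toReal * (d1 s' - d2 s') := by ring
      rw [heq]
      refine (abs_add_le _ _).trans ?_
      rw [abs_mul, abs_mul, abs_of_nonneg (hd1n s'), abs_of_nonneg ENNReal.toReal_nonneg,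
        mul_comm]
    have key : tvFun (chainMarginal p1 q0 (t+1)) (chainMarginal p2 q0 (t+1))
        ≤ (∑ s', d1 s' * tv (p1 s') (p2 s')) + tvFun d1 d2 := by
      show (1/2 : ℝ) * ∑ s, |chainMarginal p1 q0 (t+1) s - chainMarginal p2 q0 (t+1) s| ≤ _
      have hle : (1/2 : ℝ) * ∑ s, |chainMarginal p1 q0 (t+1) s - chainMarginal p2 q0 (t+1) s|
          ≤ (1/2 : ℝ) * ∑ s : S, ∑ s' : S,
              (d1 s' * |((p1 s') s).toReal - ((p2 s') s).toReal|
               + ((p2 s') s).toReal * |d1 s' - d2 s'|) := by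
        refine mul_le_mul_of_nonneg_left (Finset.sum_le_sum fun s _ => ?_) (by norm_num)
        simpa [chainMarginal, hd1, hd2] using hstep s
      refine hle.trans (le_of_eq ?_)
      rw [show (∑ s : S, ∑ s' : S,
              (d1 s' * |((p1 s') s).toReal - ((p2 s') s).toReal|
               + ((p2 s') s).toReal * |d1 s' - d2 s'|))
          = (∑ s : S, ∑ s' : S, d1 s' * |((p1 s') s).toReal - ((p2 s') s).toReal|)
            + (∑ s : S, ∑ s' : S, ((p2 s') s).toReal * |d1 s' - d2 s'|) by
        rw [← Finset.sum_add_distrib]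
        exact Finset.sum_congr rfl fun s _ => Finset.sum_add_distrib]
      rw [mul_add]
      congr 1
      · rw [Finset.sum_comm]
        rw [Finset.mul_sum]
        refine Finset.sum_congr rfl fun s' _ => ?_
        rw [← Finset.mul_sum]
        simp only [tv]
        ring
      · rw [Finset.sum_comm]
        simp only [tvFun]
        congr 1
        refine Finset.sum_congr rfl fun s' _ => ?_
        rw [← Finset.sum_mul, pmf_sum_toReal, one_mul]
    calc tvFun (chainMarginal p1 q0 (t+1)) (chainMarginal p2 q0 (t+1))
        ≤ (∑ s', d1 s' * tv (p1 s') (p2 s')) + tvFun d1 d2 := key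
      _ ≤ δ + (t : ℝ) * δ := add_le_add (hδ t) ih
      _ = ((t + 1 : ℕ) : ℝ) * δ := by push_cast; ring
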